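/- Let T be a densely defined C-selfadjoint operator with compact resolvent (T − z)⁻¹ for some z ∈ ℂ. Then ‖(T − z)⁻¹‖ = 1 / infₙ λₙ, where (λₙ) are the positive solutions of the antilinear eigenvalue problem (T − z) uₙ = λₙ C uₙ with (uₙ) an orthonormal basis of H. -/

import Mathlib

open scoped ComplexConjugate

local notation "⟪" x ", " y "⟫" => @inner ℂ _ _ x y

/-- For a densely defined `C`-selfadjoint operator `T` with compact resolvent
`R = (T - z)⁻¹`, the norm of the resolvent is `1 / infₙ λₙ`, where `λₙ > 0` solve the
antilinear eigenvalue problem `(T - z) uₙ = λₙ C uₙ` for an orthonormal basis `(uₙ)`. -/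
theorem resolvent_norm_eq_inv_inf_antilinear_eigenvalues {H : Type*}
    [NormedAddCommGroup H] [InnerProductSpace ℂ H] [CompleteSpace H]
    (C : H → H)
    (hadd : ∀ f g, C (f + g) = C f + C g)
    (hsmul : ∀ (c : ℂ) (f : H), C (c • f) = conj c • C f)
    (hinv : ∀ f, C (C f) = f)
    (hinner : ∀ f g, ⟪C f, C g⟫ = ⟪g, f⟫)
    (T : H →ₗ.[ℂ] H)
    (hdense : Dense (T.domain : Set H))
    (hCdom : ∀ x, x ∈ T.domain ↔ C x ∈ T.adjoint.domain)
    (hCsa : ∀ (x : T.domain) (h : C (x : H) ∈ T.adjoint.domain),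
      T x = C (T.adjoint ⟨C (x : H), h⟩))
    (z : ℂ)
    (R : H →L[ℂ] H) (hRcompact : IsCompactOperator R)
    (hRT : ∀ x : T.domain, R (T x - z • (x : H)) = x)
    (hTR : ∀ y : H, ∃ h : R y ∈ T.domain, T ⟨R y, h⟩ - z • R y = y)
    (u : HilbertBasis ℕ ℂ H) (lam : ℕ → ℝ)
    (hlam : ∀ m, 0 < lam m)
    (heig : ∀ m, ∃ h : u m ∈ T.domain,
      T ⟨u m, h⟩ - z • (u m) = (lam m : ℂ) • C (u m)) :
    ‖R‖ = (⨅ m, lam m)⁻¹ := by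
  classical
  set a : ℝ := ⨅ m, lam m with ha_def
  -- C preserves norms
  have hCnorm : ∀ f, ‖C f‖ = ‖f‖ := by
    intro f
    have h1 : ⟪C f, C f⟫ = ⟪f, f⟫ := hinner f f
    rw [inner_self_eq_norm_sq_to_K, inner_self_eq_norm_sq_to_K] at h1
    have h2 : ‖C f‖ ^ 2 = ‖f‖ ^ 2 := by exact_mod_cast h1
    nlinarith [norm_nonneg (C f), norm_nonneg f]
  have hunorm : ∀ m, ‖(u m : H)‖ = 1 := fun m => u.orthonormal.1 m
  -- R maps C (u m) to (lam m)⁻¹ • u m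
  have hstep : ∀ m, R (C (u m)) = ((lam m : ℂ))⁻¹ • u m := by
    intro m
    obtain ⟨h, he⟩ := heig m
    have h2 := hRT ⟨u m, h⟩
    rw [he, map_smul] at h2
    have hne : ((lam m : ℂ)) ≠ 0 := by
      exact_mod_cast (Complex.ofReal_ne_zero).mpr (hlam m).ne'
    exact ((inv_smul_eq_iff₀ hne).mpr h2.symm).symm
  -- norm of R at C (u m)
  have hRCu : ∀ m, ‖R (C (u m))‖ = (lam m)⁻¹ := by
    intro m
    rw [hstep m, norm_smul, hunorm, mul_one]
    simp [abs_of_pos (hlam m)]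
  have hRpos : 0 < ‖R‖ := by
    have h0 : (lam 0)⁻¹ ≤ ‖R‖ * ‖C (u 0)‖ := by
      rw [← hRCu 0]; exact R.le_opNorm _
    rw [hCnorm, hunorm, mul_one] at h0
    exact lt_of_lt_of_le (inv_pos.mpr (hlam 0)) h0
  have hlamlb : ∀ m, ‖R‖⁻¹ ≤ lam m := by
    intro m
    have h0 : (lam m)⁻¹ ≤ ‖R‖ := by
      have := R.le_opNorm (C (u m))
      rwa [hRCu m, hCnorm, hunorm, mul_one] at this
    calc ‖R‖⁻¹ ≤ ((lam m)⁻¹)⁻¹ := inv_anti₀ (inv_pos.mpr (hlam m)) h0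
      _ = lam m := inv_inv _
  have hbdd : BddBelow (Set.range lam) := ⟨0, by rintro x ⟨m, rfl⟩; exact (hlam m).le⟩
  have ha_pos : 0 < a := lt_of_lt_of_le (inv_pos.mpr hRpos) (le_ciInf hlamlb)
  have ha_le : ∀ m, a ≤ lam m := fun m => ciInf_le hbdd m
  have ha_inv_le : a⁻¹ ≤ ‖R‖ := by
    calc a⁻¹ ≤ (‖R‖⁻¹)⁻¹ := inv_anti₀ (inv_pos.mpr hRpos) (le_ciInf hlamlb)
      _ = ‖R‖ := inv_inv _
  -- key coefficient identity
  have hcoef : ∀ m y, ⟪C (u m), y⟫ = (lam m : ℂ) * ⟪(u m : H), R y⟫ := by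
    intro m y
    obtain ⟨hx, hxy⟩ := hTR y
    obtain ⟨hm, he⟩ := heig m
    have hadjdom : C (u m) ∈ T.adjoint.domain := (hCdom (u m)).1 hm
    have hTu : T ⟨u m, hm⟩ = z • (u m : H) + (lam m : ℂ) • C (u m) := by
      rw [← he]; abel
    have hTadj : (T.adjoint ⟨C (u m), hadjdom⟩ : H)
        = (conj z) • C (u m) + (lam m : ℂ) • (u m : H) := by
      have h1 := hCsa ⟨u m, hm⟩ hadjdom
      have h2 : C (T ⟨u m, hm⟩) = (T.adjoint ⟨C (u m), hadjdom⟩ : H) := by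
        rw [h1, hinv]
      rw [← h2, hTu, hadd, hsmul, hsmul, hinv]
      simp [Complex.conj_ofReal]
    have hform := (T.adjoint_isFormalAdjoint hdense) ⟨C (u m), hadjdom⟩ ⟨R y, hx⟩
    rw [hTadj] at hform
    calc ⟪C (u m), y⟫ = ⟪C (u m), T ⟨R y, hx⟩ - z • R y⟫ := by rw [hxy]
      _ = ⟪C (u m), T ⟨R y, hx⟩⟫ - z * ⟪C (u m), R y⟫ := by
          rw [inner_sub_right, inner_smul_right]
      _ = ⟪(conj z) • C (u m) + (lam m : ℂ) • (u m : H), R y⟫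
            - z * ⟪C (u m), R y⟫ := by rw [← hform]
      _ = (lam m : ℂ) * ⟪(u m : H), R y⟫ := by
          rw [inner_add_left, inner_smul_left, inner_smul_left]
          simp only [Complex.conj_conj, Complex.conj_ofReal, RingHom.id_apply]
          ring
  -- orthonormal family w = C ∘ u, it is a Hilbert basis
  have hworth : Orthonormal ℂ (fun m => C (u m)) := by
    rw [orthonormal_iff_ite]
    intro i j
    rw [hinner, orthonormal_iff_ite.mp u.orthonormal j i]
    by_cases h : i = j <;> simp [h, eq_comm]
  have hC0 : C 0 = 0 := by
    have h := hadd 0 0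
    rw [add_zero] at h
    exact (add_eq_left.mp h.symm)
  have hsp : (Submodule.span ℂ (Set.range fun m => C (u m)))ᗮ = ⊥ := by
    rw [Submodule.eq_bot_iff]
    intro y hy
    have hy' : ∀ m, ⟪C (u m), y⟫ = 0 := fun m =>
      Submodule.inner_right_of_mem_orthogonal
        (Submodule.subset_span (Set.mem_range_self m)) hy
    have hy'' : ∀ m, ⟪C y, (u m : H)⟫ = 0 := by
      intro m
      have h1 : ⟪C (u m), C (C y)⟫ = ⟪C y, (u m : H)⟫ := hinner (u m) (C y)
      rw [hinv] at h1
      rw [← h1, hy' m]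
    have hmem : C y ∈ (Submodule.span ℂ (Set.range (u : ℕ → H)))ᗮ := by
      rw [Submodule.mem_orthogonal']
      intro v hv
      induction hv using Submodule.span_induction with
      | mem v hvmem =>
          obtain ⟨m, rfl⟩ := hvmem
          exact hy'' m
      | zero => simp
      | add v w _ _ h1 h2 => rw [inner_add_right, h1, h2, add_zero]
      | smul c v _ h1 => rw [inner_smul_right, h1, mul_zero]
    have hbot : (Submodule.span ℂ (Set.range (u : ℕ → H)))ᗮ = ⊥ := by
      rw [← Submodule.topologicalClosure_eq_top_iff]
      exact u.dense_span
    have hCy0 : C y = 0 := by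
      rw [hbot] at hmem
      simpa using hmem
    have : C (C y) = C 0 := by rw [hCy0]
    rwa [hinv, hC0] at this
  set v : HilbertBasis ℕ ℂ H := HilbertBasis.mkOfOrthogonalEqBot hworth hsp with hv_def
  have hv_coe : ∀ m, (v m : H) = C (u m) := by
    intro m
    rw [hv_def]
    exact congrFun (HilbertBasis.coe_mkOfOrthogonalEqBot hworth hsp) m
  -- Parseval
  have key : ∀ (b : HilbertBasis ℕ ℂ H) (x : H),
      HasSum (fun i => ‖⟪(b i : H), x⟫‖ ^ 2) (‖x‖ ^ 2) := by
    intro b x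
    have h := (b.hasSum_inner_mul_inner x x).mapL Complex.reCLM
    have h1 : (fun i => Complex.reCLM (⟪x, b i⟫ * ⟪b i, x⟫))
        = fun i => ‖⟪(b i : H), x⟫‖ ^ 2 := by
      funext i
      rw [← inner_conj_symm x (b i)]
      simp only [Complex.reCLM_apply]
      rw [mul_comm, Complex.mul_conj]
      rw [Complex.ofReal_re, Complex.normSq_eq_norm_sq]
    have h2 : Complex.reCLM ⟪x, x⟫ = ‖x‖ ^ 2 := by
      simpa using inner_self_eq_norm_sq (𝕜 := ℂ) x
    rwa [h1, h2] at h
  -- the operator norm bound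
  have hbound : ∀ y, ‖R y‖ ≤ a⁻¹ * ‖y‖ := by
    intro y
    have h1 := key u (R y)
    have h2 := (key v y).mul_left (a⁻¹ ^ 2)
    have hle : ∀ i, ‖⟪(u i : H), R y⟫‖ ^ 2 ≤ a⁻¹ ^ 2 * ‖⟪(v i : H), y⟫‖ ^ 2 := by
      intro i
      rw [hv_coe i, hcoef i y, norm_mul]
      have hlnorm : ‖((lam i : ℂ))‖ = lam i := by
        rw [Complex.norm_real, Real.norm_eq_abs, abs_of_pos (hlam i)]
      rw [hlnorm]
      have h3 : (1 : ℝ) ≤ a⁻¹ * lam i := by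
        rw [← inv_mul_cancel₀ ha_pos.ne']
        exact mul_le_mul_of_nonneg_left (ha_le i) (inv_nonneg.mpr ha_pos.le)
      have h4 : (1 : ℝ) ≤ (a⁻¹ * lam i) ^ 2 := by nlinarith
      calc ‖⟪(u i : H), R y⟫‖ ^ 2 = ‖⟪(u i : H), R y⟫‖ ^ 2 * 1 := by ring
        _ ≤ ‖⟪(u i : H), R y⟫‖ ^ 2 * (a⁻¹ * lam i) ^ 2 :=
            mul_le_mul_of_nonneg_left h4 (sq_nonneg _)
        _ = a⁻¹ ^ 2 * (lam i * ‖⟪(u i : H), R y⟫‖) ^ 2 := by ring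
    have h4 : ‖R y‖ ^ 2 ≤ a⁻¹ ^ 2 * ‖y‖ ^ 2 := hasSum_le hle h1 h2
    have h5 : ‖R y‖ ^ 2 ≤ (a⁻¹ * ‖y‖) ^ 2 := by rw [mul_pow]; exact h4
    nlinarith [norm_nonneg (R y), norm_nonneg y, inv_nonneg.mpr ha_pos.le,
      mul_nonneg (inv_nonneg.mpr ha_pos.le) (norm_nonneg y)]
  exact le_antisymm (R.opNorm_le_bound (inv_nonneg.mpr ha_pos.le) hbound) ha_inv_le
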